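/- Let (LP_D) be a linear program in variables x indexed by H = H_0 ∪ H_D (non-depot and depot arcs) of the form: min c^T x s.t. flow conservation at depot nodes, arbitrary constraints on x|_{H_0}, x ≥ 0, where c is supported on H_0 only (no parking or pull-in/out costs) and depot flow-conservation couples x|_{H_D} to x|_{H_0} via a path network per depot timeline. Let (LP_C) be the program obtained by eliminating the variables x|_{H_D}, replacing depot flow conservation by the cumulative inventory inequalities b_{0_v} − Σ_{h∈H⁺_v} ν_h x_h + Σ_{h∈H⁻_v} ν_h x_h ≥ 0 for each depot node v. Then for every x₀ feasible in (LP_C) there exists an extension (x₀, x_D) feasible in (LP_D) with equal cost, and conversely every feasible point of (LP_D) restricts to a feasible point of (LP_C) with equal cost; hence the two programs have equal optimal values, both as LPs and as IPs (with integrality on all variables). -/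
import Mathlib


/-!
STATEMENT 5: Equivalence of the depot LP (LP_D) and the Composition LP (LP_C):
eliminating the depot parking variables and replacing depot flow conservation by
the cumulative inventory inequalities preserves feasibility in both directions
with equal cost (costs are supported on the non-depot variables only); hence the
two programs have identical sets of attainable objective values, both as LPs and
as IPs.
-/

open Finset

/-- pull amount at a depot node: ∑_h ν_h x_h with natural coefficients ν. -/
def pullAmt {H0 : Type*} [Fintype H0] (ν : H0 → ℕ) (x : H0 → ℝ) : ℝ :=
  ∑ h, (ν h : ℝ) * x h

/-- Feasibility of (LP_D): x0 satisfies the arbitrary non-depot constraints S0,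
the parking flows xD are nonnegative and satisfy flow conservation along each
depot timeline d (nodes 0,…,k d, initial inventory b0 d, pull-ins/pull-outs at
node i given by νin/νout applied to x0). -/
def DFeas {H0 D : Type*} [Fintype H0] (S0 : Set (H0 → ℝ))
    (k : D → ℕ) (b0 : D → ℕ) (νout νin : D → ℕ → H0 → ℕ)
    (x0 : H0 → ℝ) (xD : D → ℕ → ℝ) : Prop :=
  x0 ∈ S0 ∧
  (∀ d, ∀ i ≤ k d, 0 ≤ xD d i) ∧
  (∀ d, ∀ i ≤ k d,
    (if i = 0 then (b0 d : ℝ) else xD d (i - 1)) + pullAmt (νin d i) x0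
      = pullAmt (νout d i) x0 + xD d i)

/-- Feasibility of (LP_C): x0 satisfies S0 and the cumulative inventory
inequalities b_{0_v} − Σ_{h∈H⁺_v} ν_h x_h + Σ_{h∈H⁻_v} ν_h x_h ≥ 0. -/
def CFeas {H0 D : Type*} [Fintype H0] (S0 : Set (H0 → ℝ))
    (k : D → ℕ) (b0 : D → ℕ) (νout νin : D → ℕ → H0 → ℕ)
    (x0 : H0 → ℝ) : Prop :=
  x0 ∈ S0 ∧
  (∀ d, ∀ j ≤ k d,
    0 ≤ (b0 d : ℝ) - (∑ i ∈ Finset.range (j + 1), pullAmt (νout d i) x0)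
      + ∑ i ∈ Finset.range (j + 1), pullAmt (νin d i) x0)

/-- integrality of a real vector -/
def IsIntVec {ι : Type*} (x : ι → ℝ) : Prop := ∀ i, ∃ n : ℤ, x i = (n : ℝ)

/-- cumulative inventory at node j. -/
def inv {H0 D : Type*} [Fintype H0] (b0 : D → ℕ) (νout νin : D → ℕ → H0 → ℕ)
    (x0 : H0 → ℝ) (d : D) (j : ℕ) : ℝ :=
  (b0 d : ℝ) - (∑ i ∈ Finset.range (j + 1), pullAmt (νout d i) x0)
    + ∑ i ∈ Finset.range (j + 1), pullAmt (νin d i) x0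

lemma pullAmt_int {H0 : Type*} [Fintype H0] (ν : H0 → ℕ) (x : H0 → ℝ)
    (hx : IsIntVec x) : ∃ n : ℤ, pullAmt ν x = (n : ℝ) := by
  choose f hf using hx
  refine ⟨∑ h, (ν h : ℤ) * f h, ?_⟩
  simp only [pullAmt, hf]
  push_cast
  rfl

lemma inv_int {H0 D : Type*} [Fintype H0] (b0 : D → ℕ) (νout νin : D → ℕ → H0 → ℕ)
    (x0 : H0 → ℝ) (hx : IsIntVec x0) (d : D) (j : ℕ) :
    ∃ n : ℤ, inv b0 νout νin x0 d j = (n : ℝ) := by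
  have h1 : ∃ n : ℤ, (∑ i ∈ Finset.range (j + 1), pullAmt (νout d i) x0) = (n : ℝ) := by
    choose f hf using fun i => pullAmt_int (νout d i) x0 hx
    exact ⟨∑ i ∈ Finset.range (j + 1), f i, by simp [hf]⟩
  have h2 : ∃ n : ℤ, (∑ i ∈ Finset.range (j + 1), pullAmt (νin d i) x0) = (n : ℝ) := by
    choose f hf using fun i => pullAmt_int (νin d i) x0 hx
    exact ⟨∑ i ∈ Finset.range (j + 1), f i, by simp [hf]⟩
  obtain ⟨n1, hn1⟩ := h1; obtain ⟨n2, hn2⟩ := h2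
  exact ⟨(b0 d : ℤ) - n1 + n2, by simp [inv, hn1, hn2]⟩

/-- the canonical extension satisfies the flow recurrence. -/
lemma inv_recur {H0 D : Type*} [Fintype H0] (b0 : D → ℕ) (νout νin : D → ℕ → H0 → ℕ)
    (x0 : H0 → ℝ) (d : D) (i : ℕ) :
    (if i = 0 then (b0 d : ℝ) else inv b0 νout νin x0 d (i - 1)) + pullAmt (νin d i) x0
      = pullAmt (νout d i) x0 + inv b0 νout νin x0 d i := by
  cases i with
  | zero => simp [inv]; ring
  | succ m =>
      simp only [Nat.succ_ne_zero, if_false, Nat.add_sub_cancel, inv,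
        Finset.sum_range_succ]
      ring

/-- any DFeas xD agrees with the cumulative inventory. -/
lemma xD_eq_inv {H0 D : Type*} [Fintype H0] (k : D → ℕ) (b0 : D → ℕ)
    (νout νin : D → ℕ → H0 → ℕ) (x0 : H0 → ℝ) (xD : D → ℕ → ℝ) (d : D)
    (hrec : ∀ i ≤ k d,
      (if i = 0 then (b0 d : ℝ) else xD d (i - 1)) + pullAmt (νin d i) x0
        = pullAmt (νout d i) x0 + xD d i) :
    ∀ j ≤ k d, xD d j = inv b0 νout νin x0 d j := by
  intro j
  induction j with
  | zero =>
      intro hj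
      have := hrec 0 hj
      simp only [reduceIte] at this
      simp only [inv, zero_add, Finset.sum_range_one]
      linarith
  | succ m ih =>
      intro hj
      have h1 := ih (Nat.le_of_succ_le hj)
      have := hrec (m + 1) hj
      rw [if_neg (Nat.succ_ne_zero m), Nat.add_sub_cancel, h1] at this
      simp only [inv, Finset.sum_range_succ] at this ⊢
      linarith

theorem composition_model_eq_depot_model
    {H0 D : Type*} [Fintype H0]
    (S0 : Set (H0 → ℝ)) (c : H0 → ℝ)
    (k : D → ℕ) (b0 : D → ℕ) (νout νin : D → ℕ → H0 → ℕ) :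
    -- every (LP_C)-feasible point extends to an (LP_D)-feasible point (same cost,
    -- since the cost only depends on x0)
    (∀ x0, CFeas S0 k b0 νout νin x0 →
      ∃ xD, DFeas S0 k b0 νout νin x0 xD) ∧
    -- every (LP_D)-feasible point restricts to an (LP_C)-feasible point
    (∀ x0 xD, DFeas S0 k b0 νout νin x0 xD → CFeas S0 k b0 νout νin x0) ∧
    -- equal attainable objective values as LPs
    ((fun x0 => ∑ h, c h * x0 h) '' {x0 | CFeas S0 k b0 νout νin x0}
      = (fun p : (H0 → ℝ) × (D → ℕ → ℝ) => ∑ h, c h * p.1 h) ''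
          {p | DFeas S0 k b0 νout νin p.1 p.2}) ∧
    -- integral points extend integrally
    (∀ x0, CFeas S0 k b0 νout νin x0 → IsIntVec x0 →
      ∃ xD, DFeas S0 k b0 νout νin x0 xD ∧ ∀ d, ∀ i ≤ k d, ∃ n : ℤ, xD d i = (n : ℝ)) ∧
    -- equal attainable objective values as IPs
    ((fun x0 => ∑ h, c h * x0 h) ''
        {x0 | CFeas S0 k b0 νout νin x0 ∧ IsIntVec x0}
      = (fun p : (H0 → ℝ) × (D → ℕ → ℝ) => ∑ h, c h * p.1 h) ''
          {p | DFeas S0 k b0 νout νin p.1 p.2 ∧ IsIntVec p.1 ∧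
            ∀ d, ∀ i ≤ k d, ∃ n : ℤ, p.2 d i = (n : ℝ)}) := by
  have fwd : ∀ x0, CFeas S0 k b0 νout νin x0 →
      DFeas S0 k b0 νout νin x0 (fun d i => inv b0 νout νin x0 d i) := by
    rintro x0 ⟨hS, hineq⟩
    refine ⟨hS, fun d i hi => hineq d i hi, fun d i _ => inv_recur b0 νout νin x0 d i⟩
  have bwd : ∀ x0 xD, DFeas S0 k b0 νout νin x0 xD → CFeas S0 k b0 νout νin x0 := by
    rintro x0 xD ⟨hS, hpos, hrec⟩
    refine ⟨hS, fun d j hj => ?_⟩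
    have := xD_eq_inv k b0 νout νin x0 xD d (hrec d) j hj
    have h2 := hpos d j hj
    rw [this] at h2
    simpa [inv] using h2
  refine ⟨fun x0 h => ⟨_, fwd x0 h⟩, bwd, ?_, ?_, ?_⟩
  · ext v
    constructor
    · rintro ⟨x0, hx0, rfl⟩
      exact ⟨(x0, fun d i => inv b0 νout νin x0 d i), fwd x0 hx0, rfl⟩
    · rintro ⟨⟨x0, xD⟩, hp, rfl⟩
      exact ⟨x0, bwd x0 xD hp, rfl⟩
  · intro x0 h hint
    exact ⟨fun d i => inv b0 νout νin x0 d i, fwd x0 h,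
      fun d i _ => inv_int b0 νout νin x0 hint d i⟩
  · ext v
    constructor
    · rintro ⟨x0, ⟨hx0, hint⟩, rfl⟩
      exact ⟨(x0, fun d i => inv b0 νout νin x0 d i),
        ⟨fwd x0 hx0, hint, fun d i _ => inv_int b0 νout νin x0 hint d i⟩, rfl⟩
    · rintro ⟨⟨x0, xD⟩, ⟨hp, hint, _⟩, rfl⟩
      exact ⟨x0, ⟨bwd x0 xD hp, hint⟩, rfl⟩
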